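/- Any edge-regular graph with parameters (9,4,1) is isomorphic to the 3×3 rook graph. -/

import Mathlib

set_option linter.unusedSectionVars false
set_option maxHeartbeats 1000000

/-- The 3×3 rook graph. -/
def rook3 : SimpleGraph (Fin 3 × Fin 3) where
  Adj x y := x ≠ y ∧ (x.1 = y.1 ∨ x.2 = y.2)
  symm := by
    constructor
    rintro x y ⟨hne, h⟩
    exact ⟨hne.symm, by tauto⟩
  loopless := by constructor; rintro x ⟨hne, -⟩; exact hne rfl

instance : DecidableRel rook3.Adj :=
  fun x y => inferInstanceAs (Decidable (x ≠ y ∧ (x.1 = y.1 ∨ x.2 = y.2)))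


namespace Rook941
open SimpleGraph Finset

variable {V : Type*} [Fintype V] [DecidableEq V] {G : SimpleGraph V} [DecidableRel G.Adj]

lemma card_common (u v : V) :
    Fintype.card (G.commonNeighbors u v) = (G.neighborFinset u ∩ G.neighborFinset v).card := by
  simp only [← Set.toFinset_card, SimpleGraph.commonNeighbors,
    @Set.toFinset_inter _ _ _ _ _ _ (_), SimpleGraph.neighborFinset_def]
  convert (Fintype.card_congr (Equiv.setCongr (show G.neighborSet u ∩ G.neighborSet v = (((G.neighborSet u).toFinset ∩ (G.neighborSet v).toFinset : Finset V) : Set V) by simp))).trans (Fintype.card_coe _)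
  exact congrArg (@Fintype.card _) (Subsingleton.elim _ _)

lemma tri (hlam : ∀ u v : V, G.Adj u v → Fintype.card (G.commonNeighbors u v) = 1)
    {u v : V} (h : G.Adj u v) : ∃! w, G.Adj u w ∧ G.Adj v w := by
  have h1 := hlam u v h
  rw [card_common] at h1
  obtain ⟨w, hw⟩ := Finset.card_eq_one.mp h1
  refine ⟨w, ?_, ?_⟩
  · have : w ∈ G.neighborFinset u ∩ G.neighborFinset v := hw ▸ Finset.mem_singleton_self w
    simp only [Finset.mem_inter, SimpleGraph.mem_neighborFinset] at this
    exact this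
  · intro z hz
    have : z ∈ G.neighborFinset u ∩ G.neighborFinset v := by
      simp only [Finset.mem_inter, SimpleGraph.mem_neighborFinset]; exact hz
    rw [hw] at this; simpa using this

lemma common_eq (hlam : ∀ u v : V, G.Adj u v → Fintype.card (G.commonNeighbors u v) = 1)
    {u v w₁ w₂ : V} (huv : G.Adj u v) (h1a : G.Adj u w₁) (h1b : G.Adj v w₁)
    (h2a : G.Adj u w₂) (h2b : G.Adj v w₂) : w₁ = w₂ :=
  ExistsUnique.unique (tri hlam huv) ⟨h1a, h1b⟩ ⟨h2a, h2b⟩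


lemma card_four {x1 x2 x3 x4 : V} (h12 : x1 ≠ x2) (h13 : x1 ≠ x3) (h14 : x1 ≠ x4)
    (h23 : x2 ≠ x3) (h24 : x2 ≠ x4) (h34 : x3 ≠ x4) :
    ({x1, x2, x3, x4} : Finset V).card = 4 := by
  rw [Finset.card_insert_of_notMem (by simp [h12, h13, h14]),
    Finset.card_insert_of_notMem (by simp [h23, h24]),
    Finset.card_insert_of_notMem (by simp [h34]), Finset.card_singleton]

lemma nbr_eq (hreg : G.IsRegularOfDegree 4) {v x1 x2 x3 x4 : V}
    (h12 : x1 ≠ x2) (h13 : x1 ≠ x3) (h14 : x1 ≠ x4)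
    (h23 : x2 ≠ x3) (h24 : x2 ≠ x4) (h34 : x3 ≠ x4)
    (a1 : G.Adj v x1) (a2 : G.Adj v x2) (a3 : G.Adj v x3) (a4 : G.Adj v x4) :
    G.neighborFinset v = {x1, x2, x3, x4} := by
  refine (Finset.eq_of_subset_of_card_le ?_ ?_).symm
  · intro z hz
    simp only [Finset.mem_insert, Finset.mem_singleton] at hz
    rw [SimpleGraph.mem_neighborFinset]
    rcases hz with rfl | rfl | rfl | rfl <;> assumption
  · rw [card_four h12 h13 h14 h23 h24 h34, SimpleGraph.card_neighborFinset_eq_degree, hreg v]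

lemma adj_four (hreg : G.IsRegularOfDegree 4) {v x1 x2 x3 x4 y : V}
    (h12 : x1 ≠ x2) (h13 : x1 ≠ x3) (h14 : x1 ≠ x4)
    (h23 : x2 ≠ x3) (h24 : x2 ≠ x4) (h34 : x3 ≠ x4)
    (a1 : G.Adj v x1) (a2 : G.Adj v x2) (a3 : G.Adj v x3) (a4 : G.Adj v x4)
    (hy : G.Adj v y) : y = x1 ∨ y = x2 ∨ y = x3 ∨ y = x4 := by
  have h := nbr_eq hreg h12 h13 h14 h23 h24 h34 a1 a2 a3 a4
  have : y ∈ G.neighborFinset v := by rwa [SimpleGraph.mem_neighborFinset]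
  rw [h] at this
  simpa using this

lemma nbhd (hreg : G.IsRegularOfDegree 4)
    (hlam : ∀ u v : V, G.Adj u v → Fintype.card (G.commonNeighbors u v) = 1) (v : V) :
    ∃ b c d e : V, b ≠ c ∧ b ≠ d ∧ b ≠ e ∧ c ≠ d ∧ c ≠ e ∧ d ≠ e ∧
      G.neighborFinset v = {b, c, d, e} ∧
      G.Adj v b ∧ G.Adj v c ∧ G.Adj v d ∧ G.Adj v e ∧
      G.Adj b c ∧ G.Adj d e ∧
      ¬G.Adj b d ∧ ¬G.Adj b e ∧ ¬G.Adj c d ∧ ¬G.Adj c e := by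
  have hNcard : (G.neighborFinset v).card = 4 := by
    rw [SimpleGraph.card_neighborFinset_eq_degree]; exact hreg v
  obtain ⟨b, hb⟩ : (G.neighborFinset v).Nonempty := by
    rw [← Finset.card_pos, hNcard]; norm_num
  have hvb : G.Adj v b := by rwa [SimpleGraph.mem_neighborFinset] at hb
  obtain ⟨c, ⟨hvc, hbc⟩, hcu⟩ := tri hlam hvb
  have hbc' : b ≠ c := G.ne_of_adj hbc
  obtain ⟨d, hd⟩ : (G.neighborFinset v \ {b, c}).Nonempty := by
    rw [← Finset.card_pos]
    have := Finset.le_card_sdiff ({b, c} : Finset V) (G.neighborFinset v)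
    have h2 : ({b, c} : Finset V).card ≤ 2 := Finset.card_insert_le _ _ |>.trans (by simp)
    omega
  rw [Finset.mem_sdiff, Finset.mem_insert, Finset.mem_singleton, SimpleGraph.mem_neighborFinset] at hd
  obtain ⟨hvd, hdbc⟩ := hd
  push_neg at hdbc
  obtain ⟨hdb, hdc⟩ := hdbc
  obtain ⟨e, ⟨hve, hde⟩, heu⟩ := tri hlam hvd
  have hde' : d ≠ e := G.ne_of_adj hde
  have heb : e ≠ b := by
    rintro rfl
    exact hdc (hcu d ⟨hvd, hde.symm⟩)
  have hec : e ≠ c := by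
    rintro rfl
    exact hdb (common_eq hlam hvc hvb hbc.symm hvd hde.symm).symm
  have hbd : ¬G.Adj b d := fun h => hdc (hcu d ⟨hvd, h⟩)
  have hbe : ¬G.Adj b e := fun h => hec.symm (hcu e ⟨hve, h⟩).symm
  have hcd : ¬G.Adj c d := fun h => hdb ((common_eq hlam hvc hvb hbc.symm hvd h).symm)
  have hce : ¬G.Adj c e := fun h => hdc (common_eq hlam hve hvd hde.symm hvc h.symm)
  refine ⟨b, c, d, e, hbc', hdb.symm, heb.symm, hdc.symm, hec.symm, hde',
    nbr_eq hreg hbc' hdb.symm heb.symm hdc.symm hec.symm hde' hvb hvc hvd hve,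
    hvb, hvc, hvd, hve, hbc, hde, hbd, hbe, hcd, hce⟩

lemma mu2 (hcard : Fintype.card V = 9) (hreg : G.IsRegularOfDegree 4)
    (hlam : ∀ u v : V, G.Adj u v → Fintype.card (G.commonNeighbors u v) = 1)
    {v w : V} (hne : v ≠ w) (hnadj : ¬G.Adj v w) :
    (G.neighborFinset v ∩ G.neighborFinset w).card = 2 := by
  classical
  set N := G.neighborFinset v with hN
  set M := (Finset.univ : Finset V) \ insert v N with hM
  have hNmem : ∀ z, z ∈ N ↔ G.Adj v z := by
    intro z; rw [hN, SimpleGraph.mem_neighborFinset]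
  have hMmem : ∀ z, z ∈ M ↔ z ≠ v ∧ ¬G.Adj v z := by
    intro z
    rw [hM, Finset.mem_sdiff, Finset.mem_insert, hNmem]
    simp only [Finset.mem_univ, true_and]
    tauto
  have hNcard : N.card = 4 := by
    rw [hN, SimpleGraph.card_neighborFinset_eq_degree]; exact hreg v
  have hMcard : M.card = 4 := by
    rw [hM, Finset.card_sdiff_of_subset (Finset.subset_univ _), Finset.card_univ, hcard,
      Finset.card_insert_of_notMem (by rw [hNmem]; exact fun h => G.loopless.irrefl v h), hNcard]
  have hwM : w ∈ M := (hMmem w).mpr ⟨hne.symm, hnadj⟩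
  -- each u ∈ N has exactly 2 neighbors in M
  have claim2 : ∀ u ∈ N, (M.filter (fun z => G.Adj u z)).card = 2 := by
    intro u hu
    have hvu : G.Adj v u := (hNmem u).mp hu
    obtain ⟨p, ⟨hvp, hup⟩, hpu⟩ := tri hlam hvu
    have hMeq : M.filter (fun z => G.Adj u z) = G.neighborFinset u \ {v, p} := by
      ext z
      rw [Finset.mem_filter, hMmem, Finset.mem_sdiff, SimpleGraph.mem_neighborFinset,
        Finset.mem_insert, Finset.mem_singleton]
      constructor
      · rintro ⟨⟨hz1, hz2⟩, hz3⟩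
        refine ⟨hz3, ?_⟩
        rintro (rfl | rfl)
        exacts [hz1 rfl, hz2 hvp]
      · rintro ⟨hz1, hz2⟩
        push_neg at hz2
        exact ⟨⟨hz2.1, fun hvz => hz2.2 (hpu z ⟨hvz, hz1⟩)⟩, hz1⟩
    rw [hMeq, Finset.card_sdiff_of_subset]
    · rw [SimpleGraph.card_neighborFinset_eq_degree, hreg u,
        Finset.card_insert_of_notMem (by simp [G.ne_of_adj hvp]), Finset.card_singleton]
    · intro z hz
      simp only [Finset.mem_insert, Finset.mem_singleton] at hz
      rw [SimpleGraph.mem_neighborFinset]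
      rcases hz with rfl | rfl
      · exact hvu.symm
      · exact hup
  -- each z ∈ M has at most 2 neighbors in N
  obtain ⟨b, c, d, e, hbc', hbd', hbe', hcd', hce', hde', hNbcde, hvb, hvc, hvd, hve,
    hbc, hde, hbd, hbe, hcd, hce⟩ := nbhd hreg hlam v
  have hNmem4 : ∀ u, u ∈ N ↔ (u = b ∨ u = c ∨ u = d ∨ u = e) := by
    intro u; rw [hN, hNbcde]; simp
  have claim1 : ∀ z ∈ M, (N.filter (fun u => G.Adj u z)).card ≤ 2 := by
    intro z hz
    have hzv : z ≠ v := ((hMmem z).mp hz).1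
    have hmem2 : ∀ u, u ∈ N.filter (fun u => G.Adj u z) ↔
        (u = b ∨ u = c ∨ u = d ∨ u = e) ∧ G.Adj u z := by
      intro u; rw [Finset.mem_filter, hNmem4]
    have hnotbc : ¬(G.Adj b z ∧ G.Adj c z) := by
      rintro ⟨h1, h2⟩
      exact hzv (common_eq hlam hbc h1 h2 hvb.symm hvc.symm)
    have hnotde : ¬(G.Adj d z ∧ G.Adj e z) := by
      rintro ⟨h1, h2⟩
      exact hzv (common_eq hlam hde h1 h2 hvd.symm hve.symm)
    have hpair : ∀ x y : V, N.filter (fun u => G.Adj u z) ⊆ {x, y} →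
        (N.filter (fun u => G.Adj u z)).card ≤ 2 := by
      intro x y hsub
      refine (Finset.card_le_card hsub).trans ?_
      exact (Finset.card_insert_le _ _).trans (by simp)
    by_cases hbz : G.Adj b z
    · by_cases hdz : G.Adj d z
      · refine hpair b d ?_
        intro u hu
        rw [hmem2] at hu
        simp only [Finset.mem_insert, Finset.mem_singleton]
        rcases hu.1 with rfl | rfl | rfl | rfl
        · exact Or.inl rfl
        · exact absurd ⟨hbz, hu.2⟩ hnotbc
        · exact Or.inr rfl
        · exact absurd ⟨hdz, hu.2⟩ hnotde
      · refine hpair b e ?_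
        intro u hu
        rw [hmem2] at hu
        simp only [Finset.mem_insert, Finset.mem_singleton]
        rcases hu.1 with rfl | rfl | rfl | rfl
        · exact Or.inl rfl
        · exact absurd ⟨hbz, hu.2⟩ hnotbc
        · exact absurd hu.2 hdz
        · exact Or.inr rfl
    · by_cases hdz : G.Adj d z
      · refine hpair c d ?_
        intro u hu
        rw [hmem2] at hu
        simp only [Finset.mem_insert, Finset.mem_singleton]
        rcases hu.1 with rfl | rfl | rfl | rfl
        · exact absurd hu.2 hbz
        · exact Or.inl rfl
        · exact Or.inr rfl
        · exact absurd ⟨hdz, hu.2⟩ hnotde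
      · refine hpair c e ?_
        intro u hu
        rw [hmem2] at hu
        simp only [Finset.mem_insert, Finset.mem_singleton]
        rcases hu.1 with rfl | rfl | rfl | rfl
        · exact absurd hu.2 hbz
        · exact Or.inl rfl
        · exact absurd hu.2 hdz
        · exact Or.inr rfl
  -- double counting
  have hsum : ∑ z ∈ M, (N.filter (fun u => G.Adj u z)).card
      = ∑ u ∈ N, (M.filter (fun z => G.Adj u z)).card := by
    simp only [Finset.card_filter]
    rw [Finset.sum_comm]
  have hsum8 : ∑ z ∈ M, (N.filter (fun u => G.Adj u z)).card = 8 := by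
    rw [hsum, Finset.sum_congr rfl claim2, Finset.sum_const, hNcard]; rfl
  have heach := (Finset.sum_eq_sum_iff_of_le claim1).mp
    (by rw [hsum8, Finset.sum_const, hMcard]; rfl)
  have hw2 : (N.filter (fun u => G.Adj u w)).card = 2 := heach w hwM
  rw [← hw2]
  congr 1
  ext u
  rw [Finset.mem_inter, Finset.mem_filter, hNmem, SimpleGraph.mem_neighborFinset]
  exact ⟨fun ⟨h1, h2⟩ => ⟨h1, h2.symm⟩, fun ⟨h1, h2⟩ => ⟨h1, h2.symm⟩⟩

lemma other (hcard : Fintype.card V = 9) (hreg : G.IsRegularOfDegree 4)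
    (hlam : ∀ u v : V, G.Adj u v → Fintype.card (G.commonNeighbors u v) = 1)
    {u w x : V} (hne : u ≠ w) (hnadj : ¬G.Adj u w) (hxu : G.Adj u x) (hxw : G.Adj w x) :
    ∃ y, G.Adj u y ∧ G.Adj w y ∧ y ≠ x ∧ ∀ z, G.Adj u z → G.Adj w z → z = x ∨ z = y := by
  have h2 := mu2 hcard hreg hlam hne hnadj
  obtain ⟨p, q, hpq, hs⟩ := Finset.card_eq_two.mp h2
  have hmem : ∀ z, G.Adj u z → G.Adj w z → z = p ∨ z = q := by
    intro z h1 h2'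
    have : z ∈ G.neighborFinset u ∩ G.neighborFinset w := by
      rw [Finset.mem_inter, SimpleGraph.mem_neighborFinset, SimpleGraph.mem_neighborFinset]
      exact ⟨h1, h2'⟩
    rw [hs] at this
    simpa using this
  have hpmem : p ∈ G.neighborFinset u ∩ G.neighborFinset w := by rw [hs]; simp
  have hqmem : q ∈ G.neighborFinset u ∩ G.neighborFinset w := by rw [hs]; simp
  rw [Finset.mem_inter, SimpleGraph.mem_neighborFinset, SimpleGraph.mem_neighborFinset] at hpmem hqmem
  rcases hmem x hxu hxw with rfl | rfl
  · exact ⟨q, hqmem.1, hqmem.2, fun h => hpq h.symm, fun z h1 h2' => hmem z h1 h2'⟩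
  · exact ⟨p, hpmem.1, hpmem.2, fun h => hpq h, fun z h1 h2' =>
      (hmem z h1 h2').symm⟩

end Rook941


section Main

open Rook941

/-- Any edge-regular graph with parameters (9,4,1) is isomorphic to the
3×3 rook graph. -/
theorem edge_regular_9_4_1_is_rook (V : Type*) [Fintype V] [DecidableEq V]
    (G : SimpleGraph V) [DecidableRel G.Adj]
    (hcard : Fintype.card V = 9)
    (hreg : G.IsRegularOfDegree 4)
    (hlam : ∀ u v : V, G.Adj u v → Fintype.card (G.commonNeighbors u v) = 1) :
    Nonempty (G ≃g rook3) := by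
  classical
  obtain ⟨v0⟩ : Nonempty V := Fintype.card_pos_iff.mp (by omega)
  obtain ⟨b, c, d, e, hbc', hbd', hbe', hcd', hce', hde', hN0, hv0b, hv0c, hv0d, hv0e,
    hbc, hde, hbd, hbe, hcd, hce⟩ := nbhd hreg hlam v0
  have hv0b' : v0 ≠ b := G.ne_of_adj hv0b
  have hv0c' : v0 ≠ c := G.ne_of_adj hv0c
  have hv0d' : v0 ≠ d := G.ne_of_adj hv0d
  have hv0e' : v0 ≠ e := G.ne_of_adj hv0e
  -- the four diagonal vertices
  obtain ⟨a11, hba11, hda11, h11v0, hu11⟩ := other hcard hreg hlam hbd' hbd hv0b.symm hv0d.symm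
  obtain ⟨a12, hca12, hda12, h12v0, hu12⟩ := other hcard hreg hlam hcd' hcd hv0c.symm hv0d.symm
  obtain ⟨a21, hba21, hea21, h21v0, hu21⟩ := other hcard hreg hlam hbe' hbe hv0b.symm hv0e.symm
  obtain ⟨a22, hca22, hea22, h22v0, hu22⟩ := other hcard hreg hlam hce' hce hv0c.symm hv0e.symm
  -- distinctness of diagonal vertices from the cross
  have h11b : a11 ≠ b := (G.ne_of_adj hba11).symm
  have h11d : a11 ≠ d := (G.ne_of_adj hda11).symm
  have h11c : a11 ≠ c := fun h => hcd (h ▸ hda11).symm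
  have h11e : a11 ≠ e := fun h => hbe (h ▸ hba11)
  have h12c : a12 ≠ c := (G.ne_of_adj hca12).symm
  have h12d : a12 ≠ d := (G.ne_of_adj hda12).symm
  have h12b : a12 ≠ b := fun h => hbd (h ▸ hda12).symm
  have h12e : a12 ≠ e := fun h => hce (h ▸ hca12)
  have h21b : a21 ≠ b := (G.ne_of_adj hba21).symm
  have h21e : a21 ≠ e := (G.ne_of_adj hea21).symm
  have h21c : a21 ≠ c := fun h => hce (h ▸ hea21).symm
  have h21d : a21 ≠ d := fun h => hbd (h ▸ hba21)
  have h22c : a22 ≠ c := (G.ne_of_adj hca22).symm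
  have h22e : a22 ≠ e := (G.ne_of_adj hea22).symm
  have h22b : a22 ≠ b := fun h => hbe (h ▸ hea22).symm
  have h22d : a22 ≠ d := fun h => hcd (h ▸ hca22)
  -- distinctness among diagonal vertices
  have h1112 : a11 ≠ a12 := fun h =>
    h11v0 (common_eq hlam hbc hba11 (by rw [h]; exact hca12) hv0b.symm hv0c.symm)
  have h1121 : a11 ≠ a21 := fun h =>
    h11v0 (common_eq hlam hde hda11 (by rw [h]; exact hea21) hv0d.symm hv0e.symm)
  have h1122 : a11 ≠ a22 := fun h =>
    h11v0 (common_eq hlam hbc hba11 (by rw [h]; exact hca22) hv0b.symm hv0c.symm)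
  have h1221 : a12 ≠ a21 := fun h =>
    h12v0 (common_eq hlam hbc (by rw [h]; exact hba21) hca12 hv0b.symm hv0c.symm)
  have h1222 : a12 ≠ a22 := fun h =>
    h12v0 (common_eq hlam hde hda12 (by rw [h]; exact hea22) hv0d.symm hv0e.symm)
  have h2122 : a21 ≠ a22 := fun h =>
    h21v0 (common_eq hlam hbc hba21 (by rw [h]; exact hca22) hv0b.symm hv0c.symm)
  -- v0 is not adjacent to the diagonal vertices
  have n011 : ¬G.Adj v0 a11 := by
    intro h
    have := adj_four hreg hbc' hbd' hbe' hcd' hce' hde' hv0b hv0c hv0d hv0e h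
    rcases this with h' | h' | h' | h'
    exacts [h11b h', h11c h', h11d h', h11e h']
  have n012 : ¬G.Adj v0 a12 := by
    intro h
    have := adj_four hreg hbc' hbd' hbe' hcd' hce' hde' hv0b hv0c hv0d hv0e h
    rcases this with h' | h' | h' | h'
    exacts [h12b h', h12c h', h12d h', h12e h']
  have n021 : ¬G.Adj v0 a21 := by
    intro h
    have := adj_four hreg hbc' hbd' hbe' hcd' hce' hde' hv0b hv0c hv0d hv0e h
    rcases this with h' | h' | h' | h'
    exacts [h21b h', h21c h', h21d h', h21e h']
  have n022 : ¬G.Adj v0 a22 := by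
    intro h
    have := adj_four hreg hbc' hbd' hbe' hcd' hce' hde' hv0b hv0c hv0d hv0e h
    rcases this with h' | h' | h' | h'
    exacts [h22b h', h22c h', h22d h', h22e h']
  -- the remaining adjacencies (within rows 1,2 and columns 1,2)
  have hA1112 : G.Adj a11 a12 := by
    obtain ⟨t, ⟨hdt, h11t⟩, -⟩ := tri hlam hda11
    rcases adj_four hreg hv0e' h11v0.symm h12v0.symm h11e.symm h12e.symm h1112
      hv0d.symm hde hda11 hda12 hdt with rfl | rfl | rfl | rfl
    · exact absurd h11t.symm n011
    · exact absurd (common_eq hlam hde hda11 h11t.symm hv0d.symm hv0e.symm) h11v0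
    · exact absurd h11t (G.loopless.irrefl _)
    · exact h11t
  have hA1121 : G.Adj a11 a21 := by
    obtain ⟨t, ⟨hbt, h11t⟩, -⟩ := tri hlam hba11
    rcases adj_four hreg hv0c' h11v0.symm h21v0.symm h11c.symm h21c.symm h1121
      hv0b.symm hbc hba11 hba21 hbt with rfl | rfl | rfl | rfl
    · exact absurd h11t.symm n011
    · exact absurd (common_eq hlam hbc hba11 h11t.symm hv0b.symm hv0c.symm) h11v0
    · exact absurd h11t (G.loopless.irrefl _)
    · exact h11t
  have hA1222 : G.Adj a12 a22 := by
    obtain ⟨t, ⟨hct, h12t⟩, -⟩ := tri hlam hca12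
    rcases adj_four hreg hv0b' h12v0.symm h22v0.symm h12b.symm h22b.symm h1222
      hv0c.symm hbc.symm hca12 hca22 hct with rfl | rfl | rfl | rfl
    · exact absurd h12t.symm n012
    · rcases hu11 a12 h12t.symm hda12 with h' | h'
      · exact absurd h' h12v0
      · exact absurd h'.symm h1112
    · exact absurd h12t (G.loopless.irrefl _)
    · exact h12t
  have hA2122 : G.Adj a21 a22 := by
    obtain ⟨t, ⟨het, h21t⟩, -⟩ := tri hlam hea21
    rcases adj_four hreg hv0d' h21v0.symm h22v0.symm h21d.symm h22d.symm h2122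
      hv0e.symm hde.symm hea21 hea22 het with rfl | rfl | rfl | rfl
    · exact absurd h21t.symm n021
    · exact absurd (common_eq hlam hde h21t.symm hea21 hv0d.symm hv0e.symm) h21v0
    · exact absurd h21t (G.loopless.irrefl _)
    · exact h21t
  -- remaining non-adjacencies
  have nb12 : ¬G.Adj b a12 := by
    intro h
    rcases adj_four hreg hv0c' h11v0.symm h21v0.symm h11c.symm h21c.symm h1121
      hv0b.symm hbc hba11 hba21 h with h' | h' | h' | h'
    exacts [h12v0 h', h12c h', h1112 h'.symm, h1221 h']
  have nb22 : ¬G.Adj b a22 := by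
    intro h
    rcases adj_four hreg hv0c' h11v0.symm h21v0.symm h11c.symm h21c.symm h1121
      hv0b.symm hbc hba11 hba21 h with h' | h' | h' | h'
    exacts [h22v0 h', h22c h', h1122 h'.symm, h2122 h'.symm]
  have nc11 : ¬G.Adj c a11 := by
    intro h
    rcases adj_four hreg hv0b' h12v0.symm h22v0.symm h12b.symm h22b.symm h1222
      hv0c.symm hbc.symm hca12 hca22 h with h' | h' | h' | h'
    exacts [h11v0 h', h11b h', h1112 h', h1122 h']
  have nc21 : ¬G.Adj c a21 := by
    intro h
    rcases adj_four hreg hv0b' h12v0.symm h22v0.symm h12b.symm h22b.symm h1222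
      hv0c.symm hbc.symm hca12 hca22 h with h' | h' | h' | h'
    exacts [h21v0 h', h21b h', h1221 h'.symm, h2122 h']
  have nd21 : ¬G.Adj d a21 := by
    intro h
    rcases adj_four hreg hv0e' h11v0.symm h12v0.symm h11e.symm h12e.symm h1112
      hv0d.symm hde hda11 hda12 h with h' | h' | h' | h'
    exacts [h21v0 h', h21e h', h1121 h'.symm, h1221 h'.symm]
  have nd22 : ¬G.Adj d a22 := by
    intro h
    rcases adj_four hreg hv0e' h11v0.symm h12v0.symm h11e.symm h12e.symm h1112
      hv0d.symm hde hda11 hda12 h with h' | h' | h' | h'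
    exacts [h22v0 h', h22e h', h1122 h'.symm, h1222 h'.symm]
  have ne11 : ¬G.Adj e a11 := by
    intro h
    rcases adj_four hreg hv0d' h21v0.symm h22v0.symm h21d.symm h22d.symm h2122
      hv0e.symm hde.symm hea21 hea22 h with h' | h' | h' | h'
    exacts [h11v0 h', h11d h', h1121 h', h1122 h']
  have ne12 : ¬G.Adj e a12 := by
    intro h
    rcases adj_four hreg hv0d' h21v0.symm h22v0.symm h21d.symm h22d.symm h2122
      hv0e.symm hde.symm hea21 hea22 h with h' | h' | h' | h'
    exacts [h12v0 h', h12d h', h1221 h', h1222 h']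
  have n1122 : ¬G.Adj a11 a22 := by
    intro h
    rcases adj_four hreg hbd' (G.ne_of_adj hba21) h12b.symm h21d.symm h12d.symm h1221.symm
      hba11.symm hda11.symm hA1121 hA1112 h with h' | h' | h' | h'
    exacts [h22b h', h22d h', h2122 h'.symm, h1222 h'.symm]
  have n1221 : ¬G.Adj a12 a21 := by
    intro h
    rcases adj_four hreg hcd' h11c.symm h22c.symm h11d.symm h22d.symm h1122
      hca12.symm hda12.symm hA1112.symm hA1222 h with h' | h' | h' | h'
    exacts [h21c h', h21d h', h1121 h'.symm, h2122 h']
  -- assemble the isomorphism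
  set f : Fin 3 × Fin 3 → V :=
    fun p => ![![v0, b, c], ![d, a11, a12], ![e, a21, a22]] p.1 p.2 with hf
  have hinj : Function.Injective f := by
    intro p q h
    obtain ⟨i, j⟩ := p
    obtain ⟨k, l⟩ := q
    fin_cases i <;> fin_cases j <;> fin_cases k <;> fin_cases l <;>
      first
        | rfl
        | exact absurd h (by first | assumption | exact Ne.symm (by assumption))
  have hbij : Function.Bijective f :=
    (Fintype.bijective_iff_injective_and_card f).mpr ⟨hinj, by simp [hcard]⟩
  refine ⟨SimpleGraph.Iso.symm ⟨Equiv.ofBijective f hbij, ?_⟩⟩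
  intro p q
  show G.Adj (f p) (f q) ↔ rook3.Adj p q
  obtain ⟨i, j⟩ := p
  obtain ⟨k, l⟩ := q
  fin_cases i <;> fin_cases j <;> fin_cases k <;> fin_cases l <;>
    first
      | exact iff_of_false (G.loopless.irrefl _) (by decide)
      | exact iff_of_true
          (by first | assumption | exact SimpleGraph.Adj.symm (by assumption)) (by decide)
      | exact iff_of_false
          (by first | assumption | exact fun hadj => absurd hadj.symm (by assumption))
          (by decide)

end Main
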